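/- For every m ≥ 1 and all data 0 < z_1 < … < z_m, the truncated MDI prior for the Generalized Pareto distribution, corresponding to π(ξ) = e^{−(ξ+1)} for ξ ≥ −1 and π(ξ) = 0 for ξ < −1, yields a proper posterior: C_m(π; z) < ∞. -/

import Mathlib

open MeasureTheory Real Set
open scoped ENNReal Classical

/-- The inner integral over the scale `σ` of the Generalized Pareto posterior
integrand, for a fixed shape `ξ`, data `z` and prior `π(σ,ξ) ∝ π(ξ)/σ`:
`∫_{max(0, -ξ z_m)}^∞ σ^{-(m+1)} ∏_{i=1}^m (1 + ξ z_i/σ)^{-(1+1/ξ)} dσ`,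
with the Gumbel interpretation `σ^{-(m+1)} exp(-(Σ_i z_i)/σ)` when `ξ = 0`. -/
noncomputable def gpInner (m : ℕ) (z : Fin m → ℝ) (ξ : ℝ) : ℝ≥0∞ :=
  ∫⁻ σ in Set.Ioi (max 0 (-ξ * ⨆ i, z i)),
    ENNReal.ofReal
      (if ξ = 0 then σ ^ (-((m : ℝ) + 1)) * Real.exp (-(∑ i, z i) / σ)
       else σ ^ (-((m : ℝ) + 1)) * ∏ i, (1 + ξ * z i / σ) ^ (-(1 + 1 / ξ)))

/-- The Generalized Pareto posterior normalizing constant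
`C_m(π; z) = ∫_ℝ π(ξ) ∫_{max(0,-ξ z_m)}^∞ σ^{-(m+1)} ∏_i (1+ξ z_i/σ)^{-(1+1/ξ)} dσ dξ`. -/
noncomputable def gpC (m : ℕ) (z : Fin m → ℝ) (p : ℝ → ℝ) : ℝ≥0∞ :=
  ∫⁻ ξ : ℝ, ENNReal.ofReal (p ξ) * gpInner m z ξ


/-- `e^{-x} ≤ (k/x)^k` for `x > 0`. -/
lemma exp_neg_le_pow (k : ℕ) {x : ℝ} (hx : 0 < x) :
    Real.exp (-x) ≤ ((k : ℝ) / x) ^ k := by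
  rcases Nat.eq_zero_or_pos k with hk | hk
  · simp [hk, Real.exp_le_one_iff.mpr (by linarith : -x ≤ 0)]
  · have hk' : (0:ℝ) < k := by exact_mod_cast hk
    have h1 : x / k ≤ Real.exp (x / k) := by
      have := Real.add_one_le_exp (x / k)
      linarith
    have h2 : (x / k) ^ k ≤ Real.exp x := by
      calc (x / k) ^ k ≤ Real.exp (x / k) ^ k := by
            apply pow_le_pow_left₀ (by positivity) h1
        _ = Real.exp x := by
            rw [← Real.exp_nat_mul]
            congr 1
            field_simp
    have hpos : (0:ℝ) < (x / k) ^ k := by positivity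
    rw [Real.exp_neg]
    calc (Real.exp x)⁻¹ ≤ ((x / k) ^ k)⁻¹ := by
          apply inv_anti₀ hpos h2
      _ = ((k : ℝ) / x) ^ k := by
          rw [← inv_pow]
          congr 1
          field_simp


lemma lint_rpow_Ioi (m : ℕ) (hm : 1 ≤ m) {c : ℝ} (hc : 0 < c) :
    ∫⁻ σ in Set.Ioi c, ENNReal.ofReal (σ ^ (-((m : ℝ) + 1))) < ⊤ := by
  have h : (-((m:ℝ)+1)) < -1 := by
    have : (1:ℝ) ≤ m := by exact_mod_cast hm
    linarith
  exact (integrableOn_Ioi_rpow_of_lt h hc).lintegral_lt_top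

lemma lint_rpow_Ioc {a p : ℝ} (ha : 0 < a) (hp : 0 < p) :
    ∫⁻ σ in Set.Ioc 0 a, ENNReal.ofReal (σ ^ (p - 1)) = ENNReal.ofReal (a ^ p / p) := by
  have hint : IntegrableOn (fun σ : ℝ => σ ^ (p - 1)) (Set.Ioc 0 a) :=
    (intervalIntegral.intervalIntegrable_rpow' (by linarith : (-1:ℝ) < p - 1)).1
  rw [← ofReal_integral_eq_lintegral_ofReal hint]
  · congr 1
    rw [← intervalIntegral.integral_of_le ha.le,
      integral_rpow (Or.inl (by linarith : (-1:ℝ) < p - 1))]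
    rw [sub_add_cancel, Real.zero_rpow hp.ne']
    ring
  · filter_upwards [ae_restrict_mem measurableSet_Ioc] with σ hσ
    exact Real.rpow_nonneg hσ.1.le _

lemma lint_exp_Ioi (m : ℕ) (hm : 1 ≤ m) {c : ℝ} (hc : 0 < c) :
    ∫⁻ σ in Set.Ioi 0, ENNReal.ofReal (σ ^ (-((m : ℝ) + 1)) * Real.exp (-c / σ)) < ⊤ := by
  rw [← Set.Ioc_union_Ioi_eq_Ioi (zero_le_one (α := ℝ))]
  refine lt_of_le_of_lt (lintegral_union_le _ _ _) (ENNReal.add_lt_top.mpr ⟨?_, ?_⟩)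
  · -- on (0,1] : bounded by constant ((m+1)/c)^(m+1)
    have hb : ∀ σ ∈ Set.Ioc (0:ℝ) 1,
        ENNReal.ofReal (σ ^ (-((m : ℝ) + 1)) * Real.exp (-c / σ))
          ≤ ENNReal.ofReal (((m + 1 : ℝ) / c) ^ (m + 1)) := by
      intro σ hσ
      apply ENNReal.ofReal_le_ofReal
      have hσ0 : 0 < σ := hσ.1
      have hx : 0 < c / σ := by positivity
      have h1 : Real.exp (-(c/σ)) ≤ (((m+1 : ℕ) : ℝ) / (c/σ)) ^ (m+1) :=
        exp_neg_le_pow (m+1) hx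
      have h2 : (((m+1 : ℕ) : ℝ) / (c/σ)) ^ (m+1) = ((m+1:ℝ)/c) ^ (m+1) * σ ^ (m+1) := by
        rw [← mul_pow]
        congr 1
        push_cast
        field_simp
      have h3 : (σ:ℝ) ^ ((m:ℕ)+1) = σ ^ ((m:ℝ)+1) := by
        rw [← Real.rpow_natCast σ (m+1)]
        push_cast
        ring_nf
      have h4 : σ ^ (-((m:ℝ)+1)) * σ ^ ((m:ℝ)+1) = 1 := by
        rw [← Real.rpow_add hσ0, neg_add_cancel, Real.rpow_zero]
      calc σ ^ (-((m:ℝ)+1)) * Real.exp (-c / σ)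
          ≤ σ ^ (-((m:ℝ)+1)) * (((m+1:ℝ)/c) ^ (m+1) * σ ^ (m+1)) := by
            apply mul_le_mul_of_nonneg_left _ (Real.rpow_nonneg hσ0.le _)
            rw [neg_div, ← h2]
            exact h1
        _ = ((m+1:ℝ)/c) ^ (m+1) * (σ ^ (-((m:ℝ)+1)) * σ ^ ((m:ℝ)+1)) := by
            rw [h3]; ring
        _ = ((m+1:ℝ)/c) ^ (m+1) := by rw [h4, mul_one]
    calc ∫⁻ σ in Set.Ioc (0:ℝ) 1, ENNReal.ofReal (σ ^ (-((m : ℝ) + 1)) * Real.exp (-c / σ))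
        ≤ ∫⁻ _ in Set.Ioc (0:ℝ) 1, ENNReal.ofReal (((m + 1 : ℝ) / c) ^ (m + 1)) :=
          setLIntegral_mono' measurableSet_Ioc hb
      _ = ENNReal.ofReal (((m + 1 : ℝ) / c) ^ (m + 1)) * volume (Set.Ioc (0:ℝ) 1) :=
          setLIntegral_const _ _
      _ < ⊤ := by
          apply ENNReal.mul_lt_top ENNReal.ofReal_lt_top
          simp [Real.volume_Ioc]
  · -- on (1,∞) : bounded by σ^(-(m+1))
    have hb : ∀ σ ∈ Set.Ioi (1:ℝ),
        ENNReal.ofReal (σ ^ (-((m : ℝ) + 1)) * Real.exp (-c / σ))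
          ≤ ENNReal.ofReal (σ ^ (-((m : ℝ) + 1))) := by
      intro σ hσ
      apply ENNReal.ofReal_le_ofReal
      have hσ0 : (0:ℝ) < σ := lt_trans one_pos hσ
      nth_rewrite 2 [← mul_one (σ ^ (-((m:ℝ)+1)))]
      apply mul_le_mul_of_nonneg_left _ (Real.rpow_nonneg hσ0.le _)
      have : (0:ℝ) ≤ c / σ := by positivity
      exact Real.exp_le_one_iff.mpr (by rw [neg_div]; linarith)
    exact lt_of_le_of_lt (setLIntegral_mono' measurableSet_Ioi hb) (lint_rpow_Ioi m hm one_pos)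

set_option maxHeartbeats 2000000 in
lemma gpInner_bound (m : ℕ) (hm : 1 ≤ m) (z : Fin m → ℝ)
    (hzpos : ∀ i, 0 < z i) (hzmono : StrictMono z) :
    ∃ C : ℝ≥0∞, C < ⊤ ∧ ∀ ξ : ℝ, ξ ≠ 0 → -1 ≤ ξ → gpInner m z ξ ≤ C := by
  have hm' : (1:ℝ) ≤ (m:ℝ) := by exact_mod_cast hm
  set Z := ⨆ i, z i with hZdef
  have hle : ∀ i, z i ≤ Z := fun i => le_ciSup (Set.Finite.bddAbove (Set.finite_range z)) i
  have hZpos : 0 < Z := lt_of_lt_of_le (hzpos ⟨0, hm⟩) (hle ⟨0, hm⟩)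
  set w := z ⟨0, hm⟩ with hwdef
  have hwpos : 0 < w := hzpos _
  have hwle : ∀ i, w ≤ z i := fun i => hzmono.monotone (by simp [Fin.le_def])
  set S := ∑ i, z i with hSdef
  have hSpos : 0 < S := Finset.sum_pos (fun i _ => hzpos i) ⟨⟨0, hm⟩, Finset.mem_univ _⟩
  set K1 : ℝ≥0∞ := ∫⁻ σ in Set.Ioi (Z/2), ENNReal.ofReal (σ ^ (-((m:ℝ)+1))) with hK1
  set K2 : ℝ≥0∞ := ∫⁻ σ in Set.Ioi 0,
      ENNReal.ofReal (σ ^ (-((m:ℝ)+1)) * Real.exp (-(S/2)/σ)) with hK2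
  set K3 : ℝ≥0∞ := ∫⁻ σ in Set.Ioi 0,
      ENNReal.ofReal (σ ^ (-((m:ℝ)+1)) * Real.exp (-(w/2)/σ)) with hK3
  set K4 : ℝ≥0∞ := ENNReal.ofReal (2 / (w * Real.log 2) ^ m)
      + ENNReal.ofReal (1 / ((m:ℝ) * w ^ m)) with hK4
  refine ⟨K1 + K2 + K3 + K4, ?_, ?_⟩
  · have h1 := lint_rpow_Ioi m hm (by positivity : (0:ℝ) < Z/2)
    have h2 := lint_exp_Ioi m hm (by positivity : (0:ℝ) < S/2)
    have h3 := lint_exp_Ioi m hm (by positivity : (0:ℝ) < w/2)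
    have h4 : K4 < ⊤ := by
      rw [hK4]; exact ENNReal.add_lt_top.mpr ⟨ENNReal.ofReal_lt_top, ENNReal.ofReal_lt_top⟩
    exact ENNReal.add_lt_top.mpr ⟨ENNReal.add_lt_top.mpr
      ⟨ENNReal.add_lt_top.mpr ⟨h1, h2⟩, h3⟩, h4⟩
  intro ξ hξ0 hξ1
  rcases hξ0.lt_or_gt with hneg | hpos
  · -- case ξ < 0
    have hmZpos : 0 < -ξ * Z := by nlinarith
    have hmax : max 0 (-ξ * Z) = -ξ * Z := max_eq_right hmZpos.le
    have hexp0 : 0 ≤ -(1 + 1/ξ) := by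
      have h : 1/ξ ≤ -1 := by
        rw [div_le_iff_of_neg hneg]; linarith
      linarith
    have hginner : gpInner m z ξ = ∫⁻ σ in Set.Ioi (-ξ * Z),
        ENNReal.ofReal (σ ^ (-((m:ℝ)+1)) * ∏ i, (1 + ξ * z i / σ) ^ (-(1 + 1/ξ))) := by
      rw [gpInner, ← hZdef, hmax]
      simp only [if_neg hξ0]
    have hbase : ∀ σ, σ ∈ Set.Ioi (-ξ * Z) → ∀ i : Fin m,
        0 < 1 + ξ * z i / σ ∧ 1 + ξ * z i / σ ≤ 1 := by
      intro σ hσ i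
      have hσ0 : 0 < σ := lt_trans hmZpos hσ
      have hσ' : -ξ * Z < σ := hσ
      have hz1 : ξ * z i ≥ ξ * Z := by nlinarith [hle i]
      constructor
      · have h1 : 1 + ξ * z i / σ = (σ + ξ * z i) / σ := by field_simp
        rw [h1]
        apply div_pos _ hσ0
        nlinarith
      · have h2 : ξ * z i / σ ≤ 0 :=
          div_nonpos_iff.mpr (Or.inr ⟨by nlinarith [hzpos i], hσ0.le⟩)
        linarith
    rcases le_or_gt ξ (-1/2) with hhalf | hhalf
    · -- ξ ∈ [-1, -1/2] : bound by σ^{-(m+1)} on Ioi (Z/2)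
      calc gpInner m z ξ
          = ∫⁻ σ in Set.Ioi (-ξ * Z), ENNReal.ofReal
              (σ ^ (-((m:ℝ)+1)) * ∏ i, (1 + ξ * z i / σ) ^ (-(1 + 1/ξ))) := hginner
        _ ≤ ∫⁻ σ in Set.Ioi (-ξ * Z), ENNReal.ofReal (σ ^ (-((m:ℝ)+1))) := by
            apply setLIntegral_mono' measurableSet_Ioi
            intro σ hσ
            apply ENNReal.ofReal_le_ofReal
            have hσ0 : 0 < σ := lt_trans hmZpos hσ
            have hprod : (∏ i, (1 + ξ * z i / σ) ^ (-(1 + 1/ξ))) ≤ 1 := by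
              apply Finset.prod_le_one
              · intro i _
                exact Real.rpow_nonneg ((hbase σ hσ i).1).le _
              · intro i _
                exact Real.rpow_le_one ((hbase σ hσ i).1).le (hbase σ hσ i).2 hexp0
            calc σ ^ (-((m:ℝ)+1)) * ∏ i, (1 + ξ * z i / σ) ^ (-(1 + 1/ξ))
                ≤ σ ^ (-((m:ℝ)+1)) * 1 :=
                  mul_le_mul_of_nonneg_left hprod (Real.rpow_nonneg hσ0.le _)
              _ = σ ^ (-((m:ℝ)+1)) := mul_one _
        _ ≤ K1 := by
            rw [hK1]
            apply lintegral_mono_set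
            apply Set.Ioi_subset_Ioi
            nlinarith
        _ ≤ K1 + K2 + K3 + K4 := by
            calc K1 ≤ K1 + K2 := le_self_add
              _ ≤ K1 + K2 + K3 := le_self_add
              _ ≤ K1 + K2 + K3 + K4 := le_self_add
    · -- ξ ∈ (-1/2, 0) : bound by σ^{-(m+1)} exp(-(S/2)/σ) on Ioi 0
      calc gpInner m z ξ
          = ∫⁻ σ in Set.Ioi (-ξ * Z), ENNReal.ofReal
              (σ ^ (-((m:ℝ)+1)) * ∏ i, (1 + ξ * z i / σ) ^ (-(1 + 1/ξ))) := hginner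
        _ ≤ ∫⁻ σ in Set.Ioi (-ξ * Z),
              ENNReal.ofReal (σ ^ (-((m:ℝ)+1)) * Real.exp (-(S/2)/σ)) := by
            apply setLIntegral_mono' measurableSet_Ioi
            intro σ hσ
            apply ENNReal.ofReal_le_ofReal
            have hσ0 : 0 < σ := lt_trans hmZpos hσ
            apply mul_le_mul_of_nonneg_left _ (Real.rpow_nonneg hσ0.le _)
            calc (∏ i, (1 + ξ * z i / σ) ^ (-(1 + 1/ξ)))
                ≤ ∏ i, Real.exp (-(ξ+1) * (z i / σ)) := by
                  apply Finset.prod_le_prod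
                  · intro i _
                    exact Real.rpow_nonneg ((hbase σ hσ i).1).le _
                  · intro i _
                    have hb := (hbase σ hσ i).1
                    rw [Real.rpow_def_of_pos hb]
                    apply Real.exp_le_exp.mpr
                    have hlog : Real.log (1 + ξ * z i / σ) ≤ ξ * z i / σ := by
                      have := Real.log_le_sub_one_of_pos hb; linarith
                    have h2 : Real.log (1 + ξ * z i / σ) * (-(1 + 1/ξ))
                        ≤ (ξ * z i / σ) * (-(1 + 1/ξ)) :=
                      mul_le_mul_of_nonneg_right hlog hexp0
                    have h3 : (ξ * z i / σ) * (-(1 + 1/ξ)) = -(ξ+1) * (z i / σ) := by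
                      field_simp
                    linarith [h3 ▸ h2]
              _ = Real.exp (∑ i, -(ξ+1) * (z i / σ)) := (Real.exp_sum _ _).symm
              _ ≤ Real.exp (-(S/2)/σ) := by
                  apply Real.exp_le_exp.mpr
                  have hσ0 : 0 < σ := lt_trans hmZpos hσ
                  have hsum : ∑ i, -(ξ+1) * (z i / σ) = -(ξ+1) * (S / σ) := by
                    rw [hSdef, ← Finset.mul_sum, ← Finset.sum_div]
                  rw [hsum]
                  have h5 : -(S/2)/σ = -(1/2) * (S/σ) := by ring
                  rw [h5]
                  apply mul_le_mul_of_nonneg_right _ (by positivity)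
                  linarith
        _ ≤ K2 := by
            rw [hK2]
            apply lintegral_mono_set
            apply Set.Ioi_subset_Ioi
            exact hmZpos.le
        _ ≤ K1 + K2 + K3 + K4 := by
            calc K2 ≤ K1 + K2 := le_add_self
              _ ≤ K1 + K2 + K3 := le_self_add
              _ ≤ K1 + K2 + K3 + K4 := le_self_add
  · -- case ξ > 0
    have hmax : max 0 (-ξ * Z) = 0 := max_eq_left (by nlinarith)
    have hexpneg : -(1 + 1/ξ) ≤ 0 := by
      have : 0 < 1/ξ := by positivity
      linarith
    set a := ξ * w with hadef
    have ha : 0 < a := by positivity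
    set b := (m:ℝ)/ξ with hbdef
    have hb : 0 < b := by positivity
    have hginner : gpInner m z ξ = ∫⁻ σ in Set.Ioi (0:ℝ),
        ENNReal.ofReal (σ ^ (-((m:ℝ)+1)) * ∏ i, (1 + ξ * z i / σ) ^ (-(1 + 1/ξ))) := by
      rw [gpInner, ← hZdef, hmax]
      simp only [if_neg hξ0]
    -- pointwise product bound
    have hprodle : ∀ σ : ℝ, 0 < σ →
        (∏ i, (1 + ξ * z i / σ) ^ (-(1 + 1/ξ))) ≤ (1 + a/σ) ^ (-((m:ℝ) + b)) := by
      intro σ hσ0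
      have hbpos : (0:ℝ) < 1 + a/σ := by positivity
      calc (∏ i, (1 + ξ * z i / σ) ^ (-(1 + 1/ξ)))
          ≤ ∏ _i : Fin m, (1 + a/σ) ^ (-(1 + 1/ξ)) := by
            apply Finset.prod_le_prod
            · intro i _
              apply Real.rpow_nonneg
              have h0 : 0 ≤ ξ * z i / σ :=
                div_nonneg (mul_nonneg hpos.le (hzpos i).le) hσ0.le
              linarith
            · intro i _
              apply Real.rpow_le_rpow_of_nonpos hbpos _ hexpneg
              have h : ξ * w / σ ≤ ξ * z i / σ :=
                (div_le_div_iff_of_pos_right hσ0).mpr (by nlinarith [hwle i])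
              rw [hadef]
              linarith
        _ = ((1 + a/σ) ^ (-(1 + 1/ξ))) ^ (m:ℕ) := by
            rw [Finset.prod_const, Finset.card_univ, Fintype.card_fin]
        _ = (1 + a/σ) ^ (-((m:ℝ) + b)) := by
            rw [← Real.rpow_natCast ((1 + a/σ) ^ (-(1 + 1/ξ))) m, ← Real.rpow_mul hbpos.le]
            congr 1
            rw [hbdef]
            field_simp
    have hstep1 : gpInner m z ξ ≤ ∫⁻ σ in Set.Ioi (0:ℝ),
        ENNReal.ofReal (σ ^ (-((m:ℝ)+1)) * (1 + a/σ) ^ (-((m:ℝ) + b))) := by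
      rw [hginner]
      apply setLIntegral_mono' measurableSet_Ioi
      intro σ hσ
      apply ENNReal.ofReal_le_ofReal
      exact mul_le_mul_of_nonneg_left (hprodle σ hσ) (Real.rpow_nonneg (le_of_lt hσ) _)
    -- piece 2 : on Ioi a
    have hpiece2 : ∫⁻ σ in Set.Ioi a,
        ENNReal.ofReal (σ ^ (-((m:ℝ)+1)) * (1 + a/σ) ^ (-((m:ℝ) + b))) ≤ K3 := by
      have hpt : ∀ σ ∈ Set.Ioi a,
          ENNReal.ofReal (σ ^ (-((m:ℝ)+1)) * (1 + a/σ) ^ (-((m:ℝ) + b)))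
            ≤ ENNReal.ofReal (σ ^ (-((m:ℝ)+1)) * Real.exp (-(w/2)/σ)) := by
        intro σ hσ
        have hσ0 : 0 < σ := lt_trans ha hσ
        have hu : 0 < a/σ := by positivity
        have hu1 : a/σ ≤ 1 := by
          rw [div_le_one hσ0]; exact (le_of_lt hσ)
        have hb2 : (0:ℝ) < 1 + a/σ := by linarith
        apply ENNReal.ofReal_le_ofReal
        apply mul_le_mul_of_nonneg_left _ (Real.rpow_nonneg hσ0.le _)
        have hstep : (1 + a/σ) ^ (-((m:ℝ) + b)) ≤ (1 + a/σ) ^ (-b) :=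
          Real.rpow_le_rpow_of_exponent_le (by linarith) (by linarith)
        apply hstep.trans
        rw [Real.rpow_def_of_pos hb2]
        apply Real.exp_le_exp.mpr
        -- log(1+u) ≥ u/2 for 0 < u ≤ 1
        have hlog : (a/σ)/2 ≤ Real.log (1 + a/σ) := by
          have h := Real.log_le_sub_one_of_pos (show (0:ℝ) < (1 + a/σ)⁻¹ by positivity)
          rw [Real.log_inv] at h
          have h1 : 1 - (1 + a/σ)⁻¹ ≤ Real.log (1 + a/σ) := by linarith
          have h2 : (a/σ)/2 ≤ 1 - (1 + a/σ)⁻¹ := by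
            have e : 1 - (1 + a/σ)⁻¹ = (a/σ)/(1 + a/σ) := by field_simp; ring
            rw [e, div_le_div_iff₀ two_pos hb2]
            nlinarith
          linarith
        have hmul := mul_le_mul_of_nonneg_left hlog hb.le
        have he : b * ((a/σ)/2) = (m:ℝ) * w / (2*σ) := by
          rw [hbdef, hadef]
          field_simp [hξ0]
        have hge : w / (2*σ) ≤ (m:ℝ) * w / (2*σ) :=
          (div_le_div_iff_of_pos_right (by positivity)).mpr (by nlinarith)
        have heq2 : -(w/2)/σ = -(w/(2*σ)) := by ring
        rw [heq2]
        nlinarith [hmul, he, hge]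
      calc ∫⁻ σ in Set.Ioi a,
          ENNReal.ofReal (σ ^ (-((m:ℝ)+1)) * (1 + a/σ) ^ (-((m:ℝ) + b)))
          ≤ ∫⁻ σ in Set.Ioi a,
            ENNReal.ofReal (σ ^ (-((m:ℝ)+1)) * Real.exp (-(w/2)/σ)) :=
            setLIntegral_mono' measurableSet_Ioi hpt
        _ ≤ K3 := by
            rw [hK3]
            exact lintegral_mono_set (Set.Ioi_subset_Ioi ha.le)
    -- piece 1 : on Ioc 0 a
    have hpiece1 : ∫⁻ σ in Set.Ioc 0 a,
        ENNReal.ofReal (σ ^ (-((m:ℝ)+1)) * (1 + a/σ) ^ (-((m:ℝ) + b))) ≤ K4 := by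
      have hlog2 : 0 < Real.log 2 := Real.log_pos one_lt_two
      rcases le_or_gt ξ (m:ℝ) with hξm | hξm
      · -- branch A : ξ ≤ m, so b ≥ 1
        have hbge1 : 1 ≤ b := by
          rw [hbdef, le_div_iff₀ hpos]
          linarith
        have hpt : ∀ σ ∈ Set.Ioc (0:ℝ) a,
            ENNReal.ofReal (σ ^ (-((m:ℝ)+1)) * (1 + a/σ) ^ (-((m:ℝ) + b)))
              ≤ ENNReal.ofReal (a ^ (-((m:ℝ)+1)) * 2 ^ (-(b-1))) := by
          intro σ hσ
          have hσ0 : 0 < σ := hσ.1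
          have hu1 : 1 ≤ a/σ := (one_le_div hσ0).mpr hσ.2
          have hupos : 0 < a/σ := by positivity
          apply ENNReal.ofReal_le_ofReal
          have hsplit : (1 + a/σ) ^ (-((m:ℝ) + b))
              = (1 + a/σ) ^ (-((m:ℝ)+1)) * (1 + a/σ) ^ (-(b-1)) := by
            rw [← Real.rpow_add (by linarith)]
            congr 1
            ring
          have h1 : (1 + a/σ) ^ (-((m:ℝ)+1)) ≤ (a/σ) ^ (-((m:ℝ)+1)) :=
            Real.rpow_le_rpow_of_nonpos hupos (by linarith) (by linarith)
          have h2 : (1 + a/σ) ^ (-(b-1)) ≤ (2:ℝ) ^ (-(b-1)) :=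
            Real.rpow_le_rpow_of_nonpos two_pos (by linarith) (by linarith)
          calc σ ^ (-((m:ℝ)+1)) * (1 + a/σ) ^ (-((m:ℝ) + b))
              ≤ σ ^ (-((m:ℝ)+1)) * ((a/σ) ^ (-((m:ℝ)+1)) * 2 ^ (-(b-1))) := by
                rw [hsplit]
                apply mul_le_mul_of_nonneg_left _ (Real.rpow_nonneg hσ0.le _)
                exact mul_le_mul h1 h2 (Real.rpow_nonneg (by linarith) _)
                  (Real.rpow_nonneg hupos.le _)
            _ = (σ * (a/σ)) ^ (-((m:ℝ)+1)) * 2 ^ (-(b-1)) := by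
                rw [Real.mul_rpow hσ0.le hupos.le]
                ring
            _ = a ^ (-((m:ℝ)+1)) * 2 ^ (-(b-1)) := by
                rw [mul_div_cancel₀ a hσ0.ne']
        have hkey : a ^ (-((m:ℝ)+1)) * 2 ^ (-(b-1)) * a ≤ 2 / (w * Real.log 2) ^ m := by
          have e1 : a ^ (-((m:ℝ)+1)) = (a ^ (m+1))⁻¹ := by
            rw [show -((m:ℝ)+1) = -(((m+1 : ℕ)):ℝ) by push_cast; ring,
              Real.rpow_neg ha.le, Real.rpow_natCast]
          have e2 : (2:ℝ) ^ (-(b-1)) = 2 * Real.exp (-(b * Real.log 2)) := by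
            rw [show -(b-1) = 1 + -b by ring, Real.rpow_add two_pos, Real.rpow_one]
            congr 1
            rw [Real.rpow_def_of_pos two_pos]
            ring_nf
          have e3 : Real.exp (-(b * Real.log 2)) ≤ (ξ / Real.log 2) ^ m := by
            have h := exp_neg_le_pow m (show 0 < b * Real.log 2 by positivity)
            have e : (m:ℝ) / (b * Real.log 2) = ξ / Real.log 2 := by
              rw [hbdef]
              field_simp
            rwa [e] at h
          rw [e1, e2]
          calc (a ^ (m+1))⁻¹ * (2 * Real.exp (-(b * Real.log 2))) * a
              ≤ (a ^ (m+1))⁻¹ * (2 * (ξ / Real.log 2) ^ m) * a := by gcongr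
            _ = 2 / (w * Real.log 2) ^ m := by
                rw [hadef]
                rw [mul_pow, mul_pow, div_pow]
                rw [pow_succ]
                field_simp
                ring
        calc ∫⁻ σ in Set.Ioc 0 a,
            ENNReal.ofReal (σ ^ (-((m:ℝ)+1)) * (1 + a/σ) ^ (-((m:ℝ) + b)))
            ≤ ∫⁻ _σ in Set.Ioc 0 a, ENNReal.ofReal (a ^ (-((m:ℝ)+1)) * 2 ^ (-(b-1))) :=
              setLIntegral_mono' measurableSet_Ioc hpt
          _ = ENNReal.ofReal (a ^ (-((m:ℝ)+1)) * 2 ^ (-(b-1))) * ENNReal.ofReal a := by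
              rw [setLIntegral_const, Real.volume_Ioc, sub_zero]
          _ = ENNReal.ofReal (a ^ (-((m:ℝ)+1)) * 2 ^ (-(b-1)) * a) := by
              rw [← ENNReal.ofReal_mul (by positivity)]
          _ ≤ ENNReal.ofReal (2 / (w * Real.log 2) ^ m) := ENNReal.ofReal_le_ofReal hkey
          _ ≤ K4 := by rw [hK4]; exact le_self_add
      · -- branch B : m < ξ, so b < 1
        have hξ1 : (1:ℝ) < ξ := lt_of_le_of_lt hm' hξm
        have hpt : ∀ σ ∈ Set.Ioc (0:ℝ) a,
            ENNReal.ofReal (σ ^ (-((m:ℝ)+1)) * (1 + a/σ) ^ (-((m:ℝ) + b)))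
              ≤ ENNReal.ofReal (a ^ (-((m:ℝ) + b)) * σ ^ (b-1)) := by
          intro σ hσ
          have hσ0 : 0 < σ := hσ.1
          have hupos : 0 < a/σ := by positivity
          apply ENNReal.ofReal_le_ofReal
          have h1 : (1 + a/σ) ^ (-((m:ℝ) + b)) ≤ (a/σ) ^ (-((m:ℝ) + b)) :=
            Real.rpow_le_rpow_of_nonpos hupos (by linarith) (by linarith)
          have h2 : (a/σ) ^ (-((m:ℝ) + b)) = a ^ (-((m:ℝ) + b)) * σ ^ ((m:ℝ) + b) := by
            rw [Real.div_rpow ha.le hσ0.le, div_eq_mul_inv, ← Real.rpow_neg hσ0.le,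
              neg_neg]
          calc σ ^ (-((m:ℝ)+1)) * (1 + a/σ) ^ (-((m:ℝ) + b))
              ≤ σ ^ (-((m:ℝ)+1)) * (a ^ (-((m:ℝ) + b)) * σ ^ ((m:ℝ) + b)) := by
                apply mul_le_mul_of_nonneg_left _ (Real.rpow_nonneg hσ0.le _)
                rw [← h2]
                exact h1
            _ = a ^ (-((m:ℝ) + b)) * (σ ^ (-((m:ℝ)+1)) * σ ^ ((m:ℝ) + b)) := by ring
            _ = a ^ (-((m:ℝ) + b)) * σ ^ (b-1) := by
                rw [← Real.rpow_add hσ0]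
                congr 1
                ring
        have hkeyB : a ^ (-((m:ℝ) + b)) * (a ^ b / b) ≤ 1 / ((m:ℝ) * w ^ m) := by
          have e0 : a ^ (-((m:ℝ) + b)) * a ^ b = a ^ (-((m:ℝ))) := by
            rw [← Real.rpow_add ha]
            congr 1
            ring
          have e1 : a ^ (-((m:ℝ))) = ((ξ ^ m) * (w ^ m))⁻¹ := by
            rw [show -((m:ℝ)) = -(((m : ℕ)):ℝ) by push_cast; ring,
              Real.rpow_neg ha.le, Real.rpow_natCast, hadef, mul_pow]
          have hξm' : ξ ≤ ξ ^ m := le_self_pow₀ hξ1.le (by omega)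
          calc a ^ (-((m:ℝ) + b)) * (a ^ b / b)
              = (a ^ (-((m:ℝ) + b)) * a ^ b) / b := by ring
            _ = ((ξ ^ m) * (w ^ m))⁻¹ / b := by rw [e0, e1]
            _ = ξ / ((m:ℝ) * (ξ ^ m * w ^ m)) := by
                rw [hbdef]
                field_simp
            _ ≤ 1 / ((m:ℝ) * w ^ m) := by
                rw [div_le_div_iff₀ (by positivity) (by positivity)]
                have hp1 : (0:ℝ) < w ^ m := by positivity
                nlinarith [mul_le_mul_of_nonneg_right hξm'
                  (le_of_lt (mul_pos (by linarith : (0:ℝ) < (m:ℝ)) hp1))]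
        calc ∫⁻ σ in Set.Ioc 0 a,
            ENNReal.ofReal (σ ^ (-((m:ℝ)+1)) * (1 + a/σ) ^ (-((m:ℝ) + b)))
            ≤ ∫⁻ σ in Set.Ioc 0 a, ENNReal.ofReal (a ^ (-((m:ℝ) + b)) * σ ^ (b-1)) :=
              setLIntegral_mono' measurableSet_Ioc hpt
          _ = ∫⁻ σ in Set.Ioc 0 a,
              ENNReal.ofReal (a ^ (-((m:ℝ) + b))) * ENNReal.ofReal (σ ^ (b-1)) := by
              apply lintegral_congr
              intro σ
              rw [← ENNReal.ofReal_mul (by positivity)]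
          _ = ENNReal.ofReal (a ^ (-((m:ℝ) + b)))
              * ∫⁻ σ in Set.Ioc 0 a, ENNReal.ofReal (σ ^ (b-1)) :=
              lintegral_const_mul' _ _ ENNReal.ofReal_ne_top
          _ = ENNReal.ofReal (a ^ (-((m:ℝ) + b))) * ENNReal.ofReal (a ^ b / b) := by
              rw [lint_rpow_Ioc ha hb]
          _ = ENNReal.ofReal (a ^ (-((m:ℝ) + b)) * (a ^ b / b)) := by
              rw [← ENNReal.ofReal_mul (by positivity)]
          _ ≤ ENNReal.ofReal (1 / ((m:ℝ) * w ^ m)) := ENNReal.ofReal_le_ofReal hkeyB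
          _ ≤ K4 := by rw [hK4]; exact le_add_self

    calc gpInner m z ξ
        ≤ ∫⁻ σ in Set.Ioi (0:ℝ),
          ENNReal.ofReal (σ ^ (-((m:ℝ)+1)) * (1 + a/σ) ^ (-((m:ℝ) + b))) := hstep1
      _ = ∫⁻ σ in Set.Ioc 0 a ∪ Set.Ioi a,
          ENNReal.ofReal (σ ^ (-((m:ℝ)+1)) * (1 + a/σ) ^ (-((m:ℝ) + b))) := by
          rw [Set.Ioc_union_Ioi_eq_Ioi ha.le]
      _ ≤ (∫⁻ σ in Set.Ioc 0 a,
            ENNReal.ofReal (σ ^ (-((m:ℝ)+1)) * (1 + a/σ) ^ (-((m:ℝ) + b))))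
          + ∫⁻ σ in Set.Ioi a,
            ENNReal.ofReal (σ ^ (-((m:ℝ)+1)) * (1 + a/σ) ^ (-((m:ℝ) + b))) :=
          lintegral_union_le _ _ _
      _ ≤ K4 + K3 := add_le_add hpiece1 hpiece2
      _ ≤ K1 + K2 + K3 + K4 := by
          calc K4 + K3 = K3 + K4 := add_comm _ _
            _ ≤ (K1 + K2) + (K3 + K4) := le_add_self
            _ = K1 + K2 + K3 + K4 := by ring


/-- For every `m ≥ 1` and all data `0 < z_1 < ⋯ < z_m`, the truncated MDI prior
for the GP distribution, with `π(ξ) = e^{-(ξ+1)}` for `ξ ≥ -1` and `π(ξ) = 0`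
for `ξ < -1`, yields a proper posterior: `C_m(π; z) < ∞`. -/
theorem gp_truncated_MDI_proper
    (m : ℕ) (hm : 1 ≤ m) (z : Fin m → ℝ)
    (hzpos : ∀ i, 0 < z i) (hzmono : StrictMono z) :
    gpC m z (fun ξ => if -1 ≤ ξ then Real.exp (-(ξ + 1)) else 0) < ⊤ := by
  obtain ⟨C, hC, hbound⟩ := gpInner_bound m hm z hzpos hzmono
  set p : ℝ → ℝ := fun ξ => if -1 ≤ ξ then Real.exp (-(ξ + 1)) else 0 with hp
  have hpm : Measurable p := by
    rw [hp]
    refine Measurable.ite (measurableSet_Ici (a := (-1:ℝ))) ?_ measurable_const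
    fun_prop
  have hae : ∀ᵐ ξ : ℝ, ENNReal.ofReal (p ξ) * gpInner m z ξ ≤ ENNReal.ofReal (p ξ) * C := by
    have h0 : ∀ᵐ ξ : ℝ, ξ ≠ 0 := by
      refine MeasureTheory.ae_iff.mpr ?_
      simpa using measure_singleton (0:ℝ)
    filter_upwards [h0] with ξ hξ0
    by_cases hξ1 : -1 ≤ ξ
    · exact mul_le_mul_right (hbound ξ hξ0 hξ1) _
    · simp [hp, hξ1]
  have hint : Integrable p := by
    have : p = Set.indicator (Set.Ici (-1:ℝ)) (fun ξ => Real.exp (-(ξ + 1))) := by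
      funext ξ
      rw [Set.indicator_apply]
      simp [hp, Set.mem_Ici]
    rw [this, integrable_indicator_iff measurableSet_Ici]
    rw [integrableOn_Ici_iff_integrableOn_Ioi]
    have h1 : IntegrableOn (fun x : ℝ => Real.exp (-1) * Real.exp (-1 * x)) (Set.Ioi (-1:ℝ)) :=
      (exp_neg_integrableOn_Ioi (-1) one_pos).const_mul _
    apply h1.congr_fun _ measurableSet_Ioi
    intro x _
    show Real.exp (-1) * Real.exp (-1 * x) = Real.exp (-(x + 1))
    rw [← Real.exp_add]
    congr 1
    ring
  calc gpC m z p ≤ ∫⁻ ξ : ℝ, ENNReal.ofReal (p ξ) * C := lintegral_mono_ae hae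
    _ = (∫⁻ ξ : ℝ, ENNReal.ofReal (p ξ)) * C :=
        lintegral_mul_const _ hpm.ennreal_ofReal
    _ < ⊤ := ENNReal.mul_lt_top hint.lintegral_lt_top hC
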